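/- Special case m = 1: let the views be V_j = π_{U_j} σ_{θ_j} R for 1 ≤ j ≤ n and the query Q = π_U σ_θ R over a single relation R. Then {V_j} determines Q if and only if for every tuple t with θ(t), there exists j with θ_j(t) such that every tuple t' with θ_j(t') and t'[U_j] = t[U_j] also satisfies θ(t') and t'[U] = t[U]. -/
import Mathlib


open scoped Classical

noncomputable def restrict {A B : Type*} (U : Set A) (t : A → B) : A → Option B :=
  fun a => if a ∈ U then some (t a) else none

noncomputable def psView {A B : Type*} (U : Set A) (θ : (A → B) → Prop)
    (S : Set (A → B)) : Set (A → Option B) :=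
  {r | ∃ t ∈ S, θ t ∧ r = restrict U t}

theorem single_relation_determinacy_iff {A B : Type*} (n : ℕ)
    (Uv : Fin n → Set A) (θv : Fin n → (A → B) → Prop)
    (U : Set A) (θ : (A → B) → Prop) :
    (∀ I I' : Set (A → B),
        (∀ j : Fin n, psView (Uv j) (θv j) I = psView (Uv j) (θv j) I') →
        psView U θ I = psView U θ I') ↔
    (∀ t : A → B, θ t → ∃ j : Fin n, θv j t ∧
        ∀ t' : A → B, θv j t' → restrict (Uv j) t' = restrict (Uv j) t →
          θ t' ∧ restrict U t' = restrict U t) := by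
  constructor
  · intro D t ht
    by_contra hc
    push_neg at hc
    -- hc : ∀ j, θv j t → ∃ t', θv j t' ∧ restrict (Uv j) t' = restrict (Uv j) t ∧ ¬...
    set W : Set (A → B) := {t' | ∃ j, θv j t ∧ θv j t' ∧
      restrict (Uv j) t' = restrict (Uv j) t ∧
      ¬(θ t' ∧ restrict U t' = restrict U t)} with hW
    have hviews : ∀ j, psView (Uv j) (θv j) (insert t W) = psView (Uv j) (θv j) W := by
      intro j
      ext r
      constructor
      · rintro ⟨s, hs, hθs, rfl⟩
        rcases hs with rfl | hsW
        · obtain ⟨t', h1, h2, h3⟩ := hc j hθs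
          refine ⟨t', ⟨j, hθs, h1, h2, ?_⟩, h1, h2.symm⟩
          rintro ⟨ha, hb⟩
          exact h3 ha hb
        · exact ⟨s, hsW, hθs, rfl⟩
      · rintro ⟨s, hs, hθs, rfl⟩
        exact ⟨s, Or.inr hs, hθs, rfl⟩
    have hQ := D (insert t W) W hviews
    have hmem : restrict U t ∈ psView U θ (insert t W) := ⟨t, Or.inl rfl, ht, rfl⟩
    rw [hQ] at hmem
    obtain ⟨s, hsW, hθs, hrs⟩ := hmem
    obtain ⟨j, _, _, _, hbad⟩ := hsW
    exact hbad ⟨hθs, hrs.symm⟩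
  · intro C I I' hv
    have key : ∀ I I' : Set (A → B),
        (∀ j, psView (Uv j) (θv j) I = psView (Uv j) (θv j) I') →
        psView U θ I ⊆ psView U θ I' := by
      intro I I' hv r hr
      obtain ⟨t, htI, hθt, rfl⟩ := hr
      obtain ⟨j, hj, hprop⟩ := C t hθt
      have hmem : restrict (Uv j) t ∈ psView (Uv j) (θv j) I' := by
        rw [← hv j]; exact ⟨t, htI, hj, rfl⟩
      obtain ⟨t', ht'I, hθt', heq⟩ := hmem
      obtain ⟨h1, h2⟩ := hprop t' hθt' heq.symm
      exact ⟨t', ht'I, h1, h2.symm⟩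
    exact Set.Subset.antisymm (key I I' hv) (key I' I (fun j => (hv j).symm))
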